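/- Let ℓ ≥ 3 be an integer and m a natural number. The number of functions μ : Fin N → ℤ with (μ, m) ∈ U^(0)_0 equals the binomial coefficient C(m + 2ℓ, 2ℓ). (This is the Hilbert function of the Ehrhart ring of the face {f ∈ STAB(G) : f⁺(V) = ℓ}, which is a polynomial ring in 2ℓ+1 variables of degree 1.) -/

import Mathlib

/-- `(μ, d)` belongs to `U^(n)` for the cycle of length `2ℓ+1`. -/
def inU (ℓ : ℕ) (n : ℤ) (μ : Fin (2 * ℓ + 1) → ℤ) (d : ℤ) : Prop :=
  (∀ i, n ≤ μ i) ∧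
  (∀ i : Fin (2 * ℓ + 1), μ i + μ (i + 1) ≤ d - n) ∧
  (∑ i, μ i ≤ (ℓ : ℤ) * d - n)

open Finset

namespace Stmt13Aux
open scoped Fin.NatCast Fin.CommRing

variable {ℓ : ℕ}

lemma sum_shift (g : Fin (2*ℓ+1) → ℤ) (i : Fin (2*ℓ+1)) :
    ∑ j ∈ range (2*ℓ+1), g (i + (j : Fin (2*ℓ+1))) = ∑ k, g k := by
  rw [← Fin.sum_univ_eq_sum_range (fun j => g (i + (j : Fin (2*ℓ+1)))) (2*ℓ+1)]
  simp only [Fin.cast_val_eq_self]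
  exact Fintype.sum_equiv (Equiv.addLeft i) _ _ (fun x => rfl)

noncomputable def A (ν : Fin (2*ℓ+1) → ℕ) (i : Fin (2*ℓ+1)) : ℤ :=
  ∑ j ∈ range (2*ℓ+1), (-1)^j * (ν (i + (j : Fin (2*ℓ+1))) : ℤ)

lemma A_add (ν : Fin (2*ℓ+1) → ℕ) (i : Fin (2*ℓ+1)) :
    A ν i + A ν (i+1) = 2 * (ν i : ℤ) := by
  have e1 : ∀ j : ℕ, i + ((j + 1 : ℕ) : Fin (2*ℓ+1)) = (i + 1) + (j : Fin (2*ℓ+1)) := by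
    intro j; push_cast; ring
  have e3 : (i + 1) + ((2*ℓ : ℕ) : Fin (2*ℓ+1)) = i := by
    have h := Fin.natCast_self (2*ℓ+1)
    push_cast at h ⊢
    linear_combination h
  rw [A, A, Finset.sum_range_succ' (fun j => (-1:ℤ)^j * (ν (i + (j : Fin (2*ℓ+1))) : ℤ)) (2*ℓ),
      Finset.sum_range_succ (fun j => (-1:ℤ)^j * (ν ((i+1) + (j : Fin (2*ℓ+1))) : ℤ)) (2*ℓ)]
  have hs : ∑ j ∈ range (2*ℓ), (-1:ℤ)^(j+1) * (ν (i + ((j+1:ℕ) : Fin (2*ℓ+1))) : ℤ)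
      = -∑ j ∈ range (2*ℓ), (-1:ℤ)^j * (ν ((i+1) + (j : Fin (2*ℓ+1))) : ℤ) := by
    rw [← Finset.sum_neg_distrib]
    refine Finset.sum_congr rfl fun j _ => ?_
    rw [e1 j, pow_succ]; ring
  have h2ℓ : (-1:ℤ)^(2*ℓ) = 1 := Even.neg_one_pow ⟨ℓ, by ring⟩
  simp only [hs, e3, h2ℓ, pow_zero, Nat.cast_zero, add_zero, one_mul]
  ring

lemma A_le (ν : Fin (2*ℓ+1) → ℕ) (i : Fin (2*ℓ+1)) :
    A ν i ≤ ∑ k, (ν k : ℤ) := by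
  rw [← sum_shift (fun k => (ν k : ℤ)) i]
  refine Finset.sum_le_sum fun j _ => ?_
  rcases Nat.even_or_odd j with h | h
  · rw [Even.neg_one_pow h, one_mul]
  · rw [Odd.neg_one_pow h, neg_one_mul]
    exact neg_le_self (by positivity)

lemma A_dvd (ν : Fin (2*ℓ+1) → ℕ) (i : Fin (2*ℓ+1)) :
    (2:ℤ) ∣ ((∑ k, (ν k : ℤ)) - A ν i) := by
  have : (∑ k, (ν k : ℤ)) - A ν i
      = ∑ j ∈ range (2*ℓ+1), ((ν (i + (j : Fin (2*ℓ+1))) : ℤ) - (-1)^j * (ν (i + (j : Fin (2*ℓ+1))) : ℤ)) := by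
    rw [Finset.sum_sub_distrib, sum_shift (fun k => (ν k : ℤ)) i, A]
  rw [this]
  refine Finset.dvd_sum fun j _ => ?_
  rcases Nat.even_or_odd j with h | h
  · rw [Even.neg_one_pow h]; simp
  · rw [Odd.neg_one_pow h]; exact ⟨(ν (i + (j : Fin (2*ℓ+1))) : ℤ), by ring⟩

lemma delta_zero (δ : Fin (2*ℓ+1) → ℤ) (h : ∀ i, δ i + δ (i+1) = 0) (i : Fin (2*ℓ+1)) :
    δ i = 0 := by
  have key : ∀ k : ℕ, δ (i + (k : Fin (2*ℓ+1))) = (-1)^k * δ i := by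
    intro k
    induction k with
    | zero => simp
    | succ n ih =>
        have e : i + ((n+1 : ℕ) : Fin (2*ℓ+1)) = (i + (n : Fin (2*ℓ+1))) + 1 := by
          push_cast; ring
        have hh := h (i + (n : Fin (2*ℓ+1)))
        rw [ih] at hh
        rw [e, pow_succ]
        linarith
  have h1 := key (2*ℓ+1)
  rw [Fin.natCast_self, add_zero, Odd.neg_one_pow ⟨ℓ, by ring⟩] at h1
  linarith

lemma shift_sum (μ : Fin (2*ℓ+1) → ℤ) : ∑ i, μ (i+1) = ∑ i, μ i :=
  Fintype.sum_equiv (Equiv.addRight (1 : Fin (2*ℓ+1))) _ _ (fun x => rfl)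

end Stmt13Aux

theorem stmt_13 (ℓ : ℕ) (hℓ : 3 ≤ ℓ) (m : ℕ) :
    {μ : Fin (2 * ℓ + 1) → ℤ |
      inU ℓ 0 μ (m : ℤ) ∧ ∑ i, μ i = (ℓ : ℤ) * (m : ℤ)}.ncard =
      Nat.choose (m + 2 * ℓ) (2 * ℓ) := by
  classical
  open Stmt13Aux in
  -- the target subtype
  have hΦ : ∀ μ : {μ : Fin (2 * ℓ + 1) → ℤ //
      inU ℓ 0 μ (m : ℤ) ∧ ∑ i, μ i = (ℓ : ℤ) * (m : ℤ)},
      ∑ i, ((m : ℤ) - μ.1 i - μ.1 (i+1)).toNat = m := by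
    rintro ⟨μ, ⟨h0, h1, -⟩, hsum⟩
    have hnn : ∀ i : Fin (2*ℓ+1), (0:ℤ) ≤ (m : ℤ) - μ i - μ (i+1) := by
      intro i
      have := h1 i
      linarith
    have hcast : ((∑ i, ((m : ℤ) - μ i - μ (i+1)).toNat : ℕ) : ℤ) = (m : ℤ) := by
      push_cast
      rw [Finset.sum_congr rfl (fun i _ => Int.toNat_of_nonneg (hnn i))]
      rw [Finset.sum_sub_distrib, Finset.sum_sub_distrib, shift_sum, hsum]
      simp only [Finset.sum_const, Finset.card_univ, Fintype.card_fin, nsmul_eq_mul]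
      push_cast
      ring
    exact_mod_cast hcast
  let Φ : {μ : Fin (2 * ℓ + 1) → ℤ //
        inU ℓ 0 μ (m : ℤ) ∧ ∑ i, μ i = (ℓ : ℤ) * (m : ℤ)} →
      {ν : Fin (2 * ℓ + 1) → ℕ // ∑ i, ν i = m} :=
    fun μ => ⟨fun i => ((m : ℤ) - μ.1 i - μ.1 (i+1)).toNat, hΦ μ⟩
  have hinj : Function.Injective Φ := by
    rintro ⟨μ, ⟨h0, h1, hx⟩, hy⟩ ⟨μ', ⟨h0', h1', hx'⟩, hy'⟩ h
    have key : ∀ i : Fin (2*ℓ+1), (μ - μ') i + (μ - μ') (i+1) = 0 := by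
      intro i
      have hi : ((m : ℤ) - μ i - μ (i+1)).toNat = ((m : ℤ) - μ' i - μ' (i+1)).toNat :=
        congrFun (congrArg Subtype.val h) i
      have e1 : (0:ℤ) ≤ (m : ℤ) - μ i - μ (i+1) := by have := h1 i; linarith
      have e2 : (0:ℤ) ≤ (m : ℤ) - μ' i - μ' (i+1) := by have := h1' i; linarith
      have : (m : ℤ) - μ i - μ (i+1) = (m : ℤ) - μ' i - μ' (i+1) := by
        rw [← Int.toNat_of_nonneg e1, ← Int.toNat_of_nonneg e2, hi]
      simp only [Pi.sub_apply]
      linarith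
    refine Subtype.ext (funext fun i => ?_)
    have := delta_zero (μ - μ') key i
    simp only [Pi.sub_apply] at this
    linarith
  have hsurj : Function.Surjective Φ := by
    rintro ⟨ν, hν⟩
    have hsum : ∑ k, (ν k : ℤ) = (m : ℤ) := by exact_mod_cast congrArg (Nat.cast : ℕ → ℤ) hν
    set μ : Fin (2*ℓ+1) → ℤ := fun i => ((m : ℤ) - A ν i) / 2 with hμdef
    have hdvd : ∀ i, (2:ℤ) ∣ ((m : ℤ) - A ν i) := by
      intro i; rw [← hsum]; exact A_dvd ν i
    have hmul : ∀ i, 2 * μ i = (m : ℤ) - A ν i := fun i => Int.mul_ediv_cancel' (hdvd i)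
    have hpair : ∀ i, μ i + μ (i+1) = (m : ℤ) - ν i := by
      intro i
      have h1 := hmul i
      have h2 := hmul (i+1)
      have h3 := A_add ν i
      linarith
    have hnn : ∀ i, (0:ℤ) ≤ μ i := by
      intro i
      have h1 := hmul i
      have h2 := A_le ν i
      rw [hsum] at h2
      linarith
    have hsumμ : ∑ i, μ i = (ℓ : ℤ) * m := by
      have h1 : ∑ i : Fin (2*ℓ+1), (μ i + μ (i+1)) = ∑ i : Fin (2*ℓ+1), ((m : ℤ) - ν i) :=
        Finset.sum_congr rfl fun i _ => hpair i
      rw [Finset.sum_add_distrib, shift_sum, Finset.sum_sub_distrib, hsum] at h1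
      simp only [Finset.sum_const, Finset.card_univ, Fintype.card_fin, nsmul_eq_mul] at h1
      push_cast at h1
      linarith
    refine ⟨⟨μ, ⟨⟨fun i => hnn i, fun i => ?_, ?_⟩, hsumμ⟩⟩, ?_⟩
    · rw [hpair i]
      have : (0:ℤ) ≤ (ν i : ℤ) := Int.natCast_nonneg _
      linarith
    · rw [hsumμ]; linarith
    · simp only [Φ]
      refine Subtype.ext (funext fun i => ?_)
      have : (m : ℤ) - μ i - μ (i+1) = (ν i : ℤ) := by have := hpair i; linarith
      simp [this]
  have hcard : {μ : Fin (2 * ℓ + 1) → ℤ |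
      inU ℓ 0 μ (m : ℤ) ∧ ∑ i, μ i = (ℓ : ℤ) * (m : ℤ)}.ncard
      = Nat.card {ν : Fin (2 * ℓ + 1) → ℕ // ∑ i, ν i = m} := by
    rw [← Nat.card_coe_set_eq]
    exact Nat.card_congr (Equiv.ofBijective Φ ⟨hinj, hsurj⟩)
  rw [hcard]
  have e2 : {ν : Fin (2 * ℓ + 1) → ℕ // ∑ i, ν i = m} ≃ Sym (Fin (2*ℓ+1)) m :=
    Equiv.subtypeEquiv (Finsupp.equivFunOnFinite.symm.trans Multiset.toFinsupp.symm.toEquiv)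
      (fun ν => by
        rw [show ((Finsupp.equivFunOnFinite.symm.trans Multiset.toFinsupp.symm.toEquiv) ν)
            = Finsupp.toMultiset (Finsupp.equivFunOnFinite.symm ν) from rfl,
          Finsupp.card_toMultiset, Finsupp.sum_fintype _ _ (fun _ => rfl)]
        simp [Finsupp.equivFunOnFinite])
  have h4 : Nat.card (Sym (Fin (2*ℓ+1)) m) = (2*ℓ+1 + m - 1).choose m := by
    rw [Nat.card_eq_fintype_card, Sym.card_sym_eq_choose, Fintype.card_fin]
  have h1 : 2 * ℓ + 1 + m - 1 = m + 2 * ℓ := by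
    rw [Nat.add_right_comm, Nat.add_sub_cancel, Nat.add_comm]
  rw [Nat.card_congr e2, h4]
  have h2 : (m + 2*ℓ).choose m = (m + 2*ℓ).choose (2*ℓ) := by
    have h3 := Nat.choose_symm (n := m + 2*ℓ) (k := m) (Nat.le_add_right m (2*ℓ))
    rw [Nat.add_sub_cancel_left] at h3
    exact h3.symm
  rw [h1]
  exact h2
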